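/- In the slow-and-steady single-arm MDP with Lagrangian penalty λ = 0, the optimal value functions satisfy V_0(U-Steady) = αγ²/(1−γ) and V_0(U-Brief) = αγ³/(1−γ), with pulling optimal in U-Steady and idling optimal in U-Brief. -/

import Mathlib

/-- In the slow-and-steady single-arm MDP with Lagrangian penalty
`λ = 0`, the value functions satisfy `V₀(U-Steady) = αγ²/(1−γ)` and
`V₀(U-Brief) = αγ³/(1−γ)`; pulling attains the maximum in U-Steady while idling
attains it in U-Brief. -/
theorem stmt_11 (α β γ ε VUS VUB : ℝ)
    (hε : ε = 1 - γ) (hγ0 : 7 / 8 < γ) (hγ1 : γ < 1)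
    (hα : 0 < (1 + 1 / γ ^ 2) * α) (hβ1 : (1 + 1 / γ ^ 2) * α < β)
    (hβ2 : β < γ * α / (1 - γ))
    (hUS : VUS = max (γ * VUB) ((1 - ε) * γ * (α / (1 - γ))))
    (hUB : VUB = max (γ * VUS) (γ * (1 - ε) * β)) :
    VUS = α * γ ^ 2 / (1 - γ) ∧ VUB = α * γ ^ 3 / (1 - γ) ∧
    VUS = (1 - ε) * γ * (α / (1 - γ)) ∧ VUB = γ * VUS := by
  have h1γ : 0 < 1 - γ := by linarith
  have hγp : 0 < γ := by linarith
  have hf : (0:ℝ) < 1 + 1 / γ ^ 2 := by positivity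
  have hα0 : 0 < α := by
    by_contra h
    push_neg at h
    nlinarith
  have hβ0 : 0 < β := by nlinarith
  have hβ2' : β * (1 - γ) < γ * α := by
    rw [lt_div_iff₀ h1γ] at hβ2
    exact hβ2
  subst hε
  have hSval : (1 - (1 - γ)) * γ * (α / (1 - γ)) = γ * γ * α / (1 - γ) := by
    field_simp
    ring
  have hBval : γ * (1 - (1 - γ)) * β = γ * γ * β := by ring
  rw [hSval] at hUS
  rw [hBval] at hUB
  set S : ℝ := γ * γ * α / (1 - γ) with hSdef
  have hSpos : 0 < S := by positivity
  have hkey : γ * γ * (β * (1 - γ)) < γ * γ * (γ * α) :=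
    mul_lt_mul_of_pos_left hβ2' (mul_pos hγp hγp)
  have hUSeqS : VUS = S := by
    rcases le_total (γ * VUS) (γ * γ * β) with hc | hc
    · -- VUB = γ²β
      have hVUB : VUB = γ * γ * β := by rw [hUB, max_eq_right hc]
      have hlt : γ * (γ * γ * β) < S := by
        rw [hSdef, lt_div_iff₀ h1γ]
        nlinarith [mul_lt_mul_of_pos_left hβ2' (show (0:ℝ) < γ*γ*γ by positivity),
          mul_nonneg (mul_nonneg (mul_pos hγp hγp).le hα0.le)
            (show (0:ℝ) ≤ 1 - γ*γ by nlinarith)]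
      have hVUS : VUS = S := by
        rw [hUS, hVUB, max_eq_right (le_of_lt hlt)]
      exfalso
      have h2 : γ * S ≤ γ * γ * β := by rw [← hVUS]; exact hc
      rw [hSdef, ← mul_div_assoc, div_le_iff₀ h1γ] at h2
      nlinarith
    · -- VUB = γ * VUS
      have hVUB : VUB = γ * VUS := by rw [hUB, max_eq_left hc]
      rw [hVUB] at hUS
      rcases le_total (γ * (γ * VUS)) S with hd | hd
      · exact hUS.trans (max_eq_right hd)
      · exfalso
        have hVUS : VUS = γ * (γ * VUS) := hUS.trans (max_eq_left hd)
        have h0 : VUS * (1 - γ * γ) = 0 := by linear_combination hVUS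
        have hz : VUS = 0 := by
          rcases mul_eq_zero.mp h0 with h | h
          · exact h
          · nlinarith
        rw [hz] at hd
        nlinarith
  have hVUB : VUB = γ * VUS := by
    have hc : γ * γ * β ≤ γ * VUS := by
      rw [hUSeqS, hSdef, ← mul_div_assoc, le_div_iff₀ h1γ]
      nlinarith
    rw [hUB, max_eq_left hc]
  refine ⟨?_, ?_, ?_, hVUB⟩
  · rw [hUSeqS, hSdef]; ring_nf
  · rw [hVUB, hUSeqS, hSdef, ← mul_div_assoc]; ring_nf
  · rw [hUSeqS, hSdef]; field_simp; ring
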